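/- Let A be a commutative ring, M a group, Λ a commutative group, π : M → Λ a group homomorphism, and R = A[Λ] the group algebra of Λ over A. Let σ₀ be a module over the group algebra A[M] that is finitely generated as an A[M]-module, and let σ be the R[M]-module whose underlying R-module is σ₀ ⊗_A R and on which m ∈ M acts by m·(v ⊗ x) = (m·v) ⊗ ((π m)·x), where (π m) is viewed as an element of R. Then the natural map End_{A[M]}(σ₀) ⊗_A R → End_{R[M]}(σ), sending ψ ⊗ y to the endomorphism determined by v ⊗ x ↦ ψ(v) ⊗ y·x, is bijective. -/

import Mathlib

open TensorProduct

section

variable {A : Type*} [CommRing A] {M : Type*} [Group M]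
variable {Λ : Type*} [CommGroup Λ]
variable {V : Type*} [AddCommGroup V] [Module A V] [Module (MonoidAlgebra A M) V]
  [IsScalarTower A (MonoidAlgebra A M) V]

/-- The action of `m : M` on an `A[M]`-module as an `A`-linear endomorphism. -/
noncomputable def mAct (m : M) : V →ₗ[A] V where
  toFun v := MonoidAlgebra.of A M m • v
  map_add' _ _ := smul_add _ _ _
  map_smul' a v := smul_comm (MonoidAlgebra.of A M m) a v

lemma mAct_one : mAct (A := A) (M := M) (V := V) 1 = LinearMap.id := by
  ext v
  show MonoidAlgebra.of A M 1 • v = v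
  rw [map_one, one_smul]

lemma mAct_mul (m n : M) :
    mAct (A := A) (M := M) (V := V) (m * n)
      = (mAct (A := A) (V := V) m) ∘ₗ (mAct (A := A) (V := V) n) := by
  ext v
  show MonoidAlgebra.of A M (m * n) • v = MonoidAlgebra.of A M m • (MonoidAlgebra.of A M n • v)
  rw [map_mul, mul_smul]

variable (π : M →* Λ)

/-- The twisted representation of `M` on `σ = σ₀ ⊗_A R`, `R = A[Λ]`: the element `m`
acts by `v ⊗ x ↦ (m • v) ⊗ ((π m)·x)`. -/
noncomputable def twistRep :
    M →* Module.End (MonoidAlgebra A Λ) ((MonoidAlgebra A Λ) ⊗[A] V) where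
  toFun m := MonoidAlgebra.of A Λ (π m) •
    LinearMap.baseChange (MonoidAlgebra A Λ) (mAct (A := A) (V := V) m)
  map_one' := by
    show MonoidAlgebra.of A Λ (π 1) •
      LinearMap.baseChange (MonoidAlgebra A Λ) (mAct (A := A) (V := V) 1) = 1
    rw [map_one, map_one, one_smul, mAct_one]
    exact LinearMap.baseChange_id
  map_mul' m n := by
    show MonoidAlgebra.of A Λ (π (m * n)) •
      LinearMap.baseChange (MonoidAlgebra A Λ) (mAct (A := A) (V := V) (m * n)) = _
    rw [map_mul, map_mul, mAct_mul, LinearMap.baseChange_comp,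
      ← Module.End.mul_eq_comp]
    exact (smul_mul_smul_comm _ _ _ _).symm

/-- The `R[M]`-module structure on `σ = σ₀ ⊗_A R` (`R = A[Λ]`), where `R` acts on the
right tensor factor and `m ∈ M` acts by `v ⊗ x ↦ (m • v) ⊗ ((π m)·x)`. -/
noncomputable def twistModule :
    Module (MonoidAlgebra (MonoidAlgebra A Λ) M) ((MonoidAlgebra A Λ) ⊗[A] V) :=
  Module.compHom ((MonoidAlgebra A Λ) ⊗[A] V)
    ((MonoidAlgebra.lift (MonoidAlgebra A Λ)
      (Module.End (MonoidAlgebra A Λ) ((MonoidAlgebra A Λ) ⊗[A] V)) M)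
      (twistRep (A := A) (V := V) π)).toRingHom

lemma twist_smul_def (s : MonoidAlgebra (MonoidAlgebra A Λ) M)
    (y : (MonoidAlgebra A Λ) ⊗[A] V) :
    letI := twistModule (A := A) (V := V) π
    s • y = ((MonoidAlgebra.lift (MonoidAlgebra A Λ)
      (Module.End (MonoidAlgebra A Λ) ((MonoidAlgebra A Λ) ⊗[A] V)) M)
      (twistRep (A := A) (V := V) π) s) y := rfl

lemma restrict_comm (ψ : V →ₗ[MonoidAlgebra A M] V) (m : M) :
    (LinearMap.restrictScalars A ψ) ∘ₗ (mAct (A := A) (V := V) m)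
      = (mAct (A := A) (V := V) m) ∘ₗ (LinearMap.restrictScalars A ψ) := by
  ext v
  show ψ (MonoidAlgebra.of A M m • v) = MonoidAlgebra.of A M m • ψ v
  exact map_smul ψ _ v

lemma twist_equivariant (ψ : V →ₗ[MonoidAlgebra A M] V)
    (s : MonoidAlgebra (MonoidAlgebra A Λ) M) (x : (MonoidAlgebra A Λ) ⊗[A] V) :
    letI := twistModule (A := A) (V := V) π
    LinearMap.baseChange (MonoidAlgebra A Λ) (LinearMap.restrictScalars A ψ) (s • x)
      = s • (LinearMap.baseChange (MonoidAlgebra A Λ)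
          (LinearMap.restrictScalars A ψ) x) := by
  letI := twistModule (A := A) (V := V) π
  rw [twist_smul_def, twist_smul_def]
  induction s using MonoidAlgebra.induction_on with
  | of m =>
      rw [MonoidAlgebra.lift_of]
      show LinearMap.baseChange (MonoidAlgebra A Λ) (LinearMap.restrictScalars A ψ)
          ((MonoidAlgebra.of A Λ (π m) •
            LinearMap.baseChange (MonoidAlgebra A Λ) (mAct (A := A) (V := V) m)) x)
        = (MonoidAlgebra.of A Λ (π m) •
            LinearMap.baseChange (MonoidAlgebra A Λ) (mAct (A := A) (V := V) m))
          (LinearMap.baseChange (MonoidAlgebra A Λ) (LinearMap.restrictScalars A ψ) x)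
      rw [LinearMap.smul_apply, LinearMap.smul_apply, map_smul]
      congr 1
      show (LinearMap.baseChange (MonoidAlgebra A Λ) (LinearMap.restrictScalars A ψ) ∘ₗ
        LinearMap.baseChange (MonoidAlgebra A Λ) (mAct (A := A) (V := V) m)) x
        = (LinearMap.baseChange (MonoidAlgebra A Λ) (mAct (A := A) (V := V) m) ∘ₗ
          LinearMap.baseChange (MonoidAlgebra A Λ) (LinearMap.restrictScalars A ψ)) x
      rw [← LinearMap.baseChange_comp, ← LinearMap.baseChange_comp, restrict_comm]
  | add f g hf hg =>
      rw [map_add, LinearMap.add_apply, LinearMap.add_apply, map_add, hf, hg]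
  | smul r f hf =>
      rw [map_smul, LinearMap.smul_apply, LinearMap.smul_apply, map_smul, hf]


/-- `ψ ⊗ y` induces an `R[M]`-linear endomorphism of `σ = σ₀ ⊗_A R`, determined by
`v ⊗ x ↦ ψ(v) ⊗ y·x`. -/
noncomputable def pairMapTwist (ψ : V →ₗ[MonoidAlgebra A M] V) (y : MonoidAlgebra A Λ) :
    letI := twistModule (A := A) (V := V) π
    ((MonoidAlgebra A Λ) ⊗[A] V) →ₗ[MonoidAlgebra (MonoidAlgebra A Λ) M]
      ((MonoidAlgebra A Λ) ⊗[A] V) :=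
  letI := twistModule (A := A) (V := V) π
  { toFun := fun x =>
      y • (LinearMap.baseChange (MonoidAlgebra A Λ) (LinearMap.restrictScalars A ψ) x)
    map_add' := fun x z => by
      show y • _ = y • _ + y • _
      rw [map_add, smul_add]
    map_smul' := fun s x => by
      simp only [RingHom.id_apply]
      rw [twist_equivariant, twist_smul_def, twist_smul_def, map_smul] }

lemma pairMapTwist_apply (ψ : V →ₗ[MonoidAlgebra A M] V) (y : MonoidAlgebra A Λ)
    (x : (MonoidAlgebra A Λ) ⊗[A] V) :
    pairMapTwist (A := A) (V := V) π ψ y x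
      = y • (LinearMap.baseChange (MonoidAlgebra A Λ)
          (LinearMap.restrictScalars A ψ) x) := rfl

/-- The natural map `End_{A[M]}(σ₀) ⊗_A R → End_{R[M]}(σ)`, sending `ψ ⊗ y` to the
endomorphism determined by `v ⊗ x ↦ ψ(v) ⊗ y·x`. -/
noncomputable def natTwistHom :
    ((V →ₗ[MonoidAlgebra A M] V) ⊗[A] (MonoidAlgebra A Λ)) →+
      (letI := twistModule (A := A) (V := V) π
       ((MonoidAlgebra A Λ) ⊗[A] V) →ₗ[MonoidAlgebra (MonoidAlgebra A Λ) M]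
        ((MonoidAlgebra A Λ) ⊗[A] V)) :=
  letI := twistModule (A := A) (V := V) π
  TensorProduct.liftAddHom
    { toFun := fun ψ =>
        { toFun := fun y => pairMapTwist (A := A) (V := V) π ψ y
          map_zero' := LinearMap.ext fun x => by
            rw [pairMapTwist_apply, zero_smul]; rfl
          map_add' := fun y y' => LinearMap.ext fun x => by
            rw [pairMapTwist_apply, add_smul]; rfl }
      map_zero' := AddMonoidHom.ext fun y => LinearMap.ext fun x => by
        show pairMapTwist (A := A) (V := V) π 0 y x = 0
        rw [pairMapTwist_apply, LinearMap.restrictScalars_zero]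
        simp
      map_add' := fun ψ χ => AddMonoidHom.ext fun y => LinearMap.ext fun x => by
        show pairMapTwist (A := A) (V := V) π (ψ + χ) y x
          = pairMapTwist (A := A) (V := V) π ψ y x + pairMapTwist (A := A) (V := V) π χ y x
        rw [pairMapTwist_apply, pairMapTwist_apply, pairMapTwist_apply,
          LinearMap.restrictScalars_add, LinearMap.baseChange_add,
          LinearMap.add_apply, smul_add] }
    (fun a ψ y => LinearMap.ext fun x => by
      show pairMapTwist (A := A) (V := V) π (a • ψ) y x
        = pairMapTwist (A := A) (V := V) π ψ (a • y) x
      rw [pairMapTwist_apply, pairMapTwist_apply, LinearMap.restrictScalars_smul,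
        LinearMap.baseChange_smul, LinearMap.smul_apply, smul_comm y a, smul_assoc])

/-! ### Auxiliary lemmas for the proof of bijectivity -/

open scoped Classical

variable (A Λ V) in
noncomputable def fslM : (MonoidAlgebra A Λ) ⊗[A] V ≃ₗ[A] (Λ →₀ V) :=
  (LinearEquiv.rTensor V (MonoidAlgebra.coeffLinearEquiv A)).trans
    (TensorProduct.finsuppScalarLeft A V Λ)

lemma fslM_tmul_apply (p : MonoidAlgebra A Λ) (v : V) (l : Λ) :
    fslM A Λ V (p ⊗ₜ[A] v) l = p.coeff l • v := by
  simp [fslM]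

lemma fslM_symm_single (l : Λ) (v : V) :
    (fslM A Λ V).symm (Finsupp.single l v) = MonoidAlgebra.single l (1 : A) ⊗ₜ[A] v := by
  simp [fslM]

variable (A Λ) in
noncomputable def fsrM (E : Type*) [AddCommGroup E] [Module A E] :
    E ⊗[A] (MonoidAlgebra A Λ) ≃ₗ[A] (Λ →₀ E) :=
  (LinearEquiv.lTensor E (MonoidAlgebra.coeffLinearEquiv A)).trans
    (TensorProduct.finsuppScalarRight A A E Λ)

lemma fsrM_tmul_apply {E : Type*} [AddCommGroup E] [Module A E]
    (ψ : E) (y : MonoidAlgebra A Λ) (l : Λ) :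
    fsrM A Λ E (ψ ⊗ₜ[A] y) l = y.coeff l • ψ := by
  simp [fsrM]

lemma mAct_apply (m : M) (v : V) :
    mAct (A := A) (V := V) m v = MonoidAlgebra.of A M m • v := rfl

lemma twist_of_smul (m : M) (x : (MonoidAlgebra A Λ) ⊗[A] V) :
    letI := twistModule (A := A) (V := V) π
    (MonoidAlgebra.of (MonoidAlgebra A Λ) M m) • x
      = MonoidAlgebra.of A Λ (π m) •
          LinearMap.baseChange (MonoidAlgebra A Λ) (mAct (A := A) (V := V) m) x := by
  letI := twistModule (A := A) (V := V) π
  rw [twist_smul_def, MonoidAlgebra.lift_of]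
  rfl

lemma twist_R_smul (r : MonoidAlgebra A Λ) (x : (MonoidAlgebra A Λ) ⊗[A] V) :
    letI := twistModule (A := A) (V := V) π
    (MonoidAlgebra.single (1 : M) r : MonoidAlgebra (MonoidAlgebra A Λ) M) • x = r • x := by
  letI := twistModule (A := A) (V := V) π
  rw [twist_smul_def, MonoidAlgebra.lift_single, map_one]
  simp

lemma phi_R_smul
    (φ : letI := twistModule (A := A) (V := V) π
      ((MonoidAlgebra A Λ) ⊗[A] V) →ₗ[MonoidAlgebra (MonoidAlgebra A Λ) M]
        ((MonoidAlgebra A Λ) ⊗[A] V))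
    (r : MonoidAlgebra A Λ) (x : (MonoidAlgebra A Λ) ⊗[A] V) :
    φ (r • x) = r • φ x := by
  letI := twistModule (A := A) (V := V) π
  have h := map_smul φ (MonoidAlgebra.single (1 : M) r) x
  rwa [twist_R_smul, twist_R_smul] at h

lemma phi_A_smul
    (φ : letI := twistModule (A := A) (V := V) π
      ((MonoidAlgebra A Λ) ⊗[A] V) →ₗ[MonoidAlgebra (MonoidAlgebra A Λ) M]
        ((MonoidAlgebra A Λ) ⊗[A] V))
    (a : A) (x : (MonoidAlgebra A Λ) ⊗[A] V) :
    φ (a • x) = a • φ x := by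
  rw [← algebraMap_smul (MonoidAlgebra A Λ) a x, phi_R_smul π φ,
    algebraMap_smul]

lemma fsl_baseChange (f : V →ₗ[A] V) (x : (MonoidAlgebra A Λ) ⊗[A] V) (l : Λ) :
    fslM A Λ V
        (LinearMap.baseChange (MonoidAlgebra A Λ) f x) l
      = f (fslM A Λ V x l) := by
  induction x using TensorProduct.induction_on with
  | zero => simp
  | tmul p v =>
      rw [LinearMap.baseChange_tmul]
      rw [fslM_tmul_apply,
        fslM_tmul_apply, map_smul]
  | add x y hx hy => simp [map_add, hx, hy]

lemma phi_comm
    (φ : letI := twistModule (A := A) (V := V) π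
      ((MonoidAlgebra A Λ) ⊗[A] V) →ₗ[MonoidAlgebra (MonoidAlgebra A Λ) M]
        ((MonoidAlgebra A Λ) ⊗[A] V))
    (m : M) (v : V) :
    φ ((1 : MonoidAlgebra A Λ) ⊗ₜ[A] (MonoidAlgebra.of A M m • v))
      = LinearMap.baseChange (MonoidAlgebra A Λ) (mAct (A := A) (V := V) m)
          (φ ((1 : MonoidAlgebra A Λ) ⊗ₜ[A] v)) := by
  letI := twistModule (A := A) (V := V) π
  have h := map_smul φ (MonoidAlgebra.of (MonoidAlgebra A Λ) M m)
    ((1 : MonoidAlgebra A Λ) ⊗ₜ[A] v)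
  rw [twist_of_smul π, twist_of_smul π, LinearMap.baseChange_tmul, mAct_apply,
    phi_R_smul π φ] at h
  have hcan : ∀ z : (MonoidAlgebra A Λ) ⊗[A] V,
      MonoidAlgebra.of A Λ ((π m)⁻¹) • MonoidAlgebra.of A Λ (π m) • z = z := by
    intro z
    rw [smul_smul, ← map_mul, inv_mul_cancel, map_one, one_smul]
  calc φ ((1 : MonoidAlgebra A Λ) ⊗ₜ[A] (MonoidAlgebra.of A M m • v))
      = MonoidAlgebra.of A Λ ((π m)⁻¹) • MonoidAlgebra.of A Λ (π m) •
          φ ((1 : MonoidAlgebra A Λ) ⊗ₜ[A] (MonoidAlgebra.of A M m • v)) := (hcan _).symm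
    _ = MonoidAlgebra.of A Λ ((π m)⁻¹) • MonoidAlgebra.of A Λ (π m) •
          LinearMap.baseChange (MonoidAlgebra A Λ) (mAct (A := A) (V := V) m)
            (φ ((1 : MonoidAlgebra A Λ) ⊗ₜ[A] v)) := by rw [h]
    _ = _ := hcan _

/-- The key computation: the `l`-th component of `φ (1 ⊗ v)` depends
`A[M]`-linearly on `v`. -/
lemma comp_smul
    (φ : letI := twistModule (A := A) (V := V) π
      ((MonoidAlgebra A Λ) ⊗[A] V) →ₗ[MonoidAlgebra (MonoidAlgebra A Λ) M]
        ((MonoidAlgebra A Λ) ⊗[A] V))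
    (r : MonoidAlgebra A M) (v : V) (l : Λ) :
    fslM A Λ V
        (φ ((1 : MonoidAlgebra A Λ) ⊗ₜ[A] (r • v))) l
      = r • fslM A Λ V
          (φ ((1 : MonoidAlgebra A Λ) ⊗ₜ[A] v)) l := by
  induction r using MonoidAlgebra.induction_on with
  | of m =>
      rw [phi_comm π φ m v, fsl_baseChange, mAct_apply]
  | add f g hf hg =>
      rw [add_smul, add_smul, TensorProduct.tmul_add, map_add, map_add,
        Finsupp.add_apply, hf, hg]
  | smul a f hf =>
      rw [smul_assoc, TensorProduct.tmul_smul, phi_A_smul π φ, map_smul,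
        Finsupp.smul_apply, hf, smul_assoc]

/-- `t ↦ ((l, v) ↦ (finsuppScalarLeft ((natTwistHom t) (1 ⊗ v))) l)` computed on the
tensor side. -/
lemma natTwistHom_component (t : (V →ₗ[MonoidAlgebra A M] V) ⊗[A] (MonoidAlgebra A Λ))
    (l : Λ) (v : V) :
    (fsrM A Λ (V →ₗ[MonoidAlgebra A M] V) t l) v
      = fslM A Λ V
          ((natTwistHom (A := A) (V := V) π t) ((1 : MonoidAlgebra A Λ) ⊗ₜ[A] v)) l := by
  induction t using TensorProduct.induction_on with
  | zero =>
      have h1 : (fsrM A Λ (V →ₗ[MonoidAlgebra A M] V))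
          (0 : (V →ₗ[MonoidAlgebra A M] V) ⊗[A] (MonoidAlgebra A Λ)) = 0 :=
        (fsrM A Λ (V →ₗ[MonoidAlgebra A M] V)).map_zero
      rw [h1, map_zero]
      simp
  | tmul ψ y =>
      have h1 : natTwistHom (A := A) (V := V) π (ψ ⊗ₜ[A] y)
          = pairMapTwist (A := A) (V := V) π ψ y := TensorProduct.liftAddHom_tmul _ _ _ _
      rw [h1]
      rw [fsrM_tmul_apply]
      rw [pairMapTwist_apply, LinearMap.baseChange_tmul]
      have h2 : y • ((1 : MonoidAlgebra A Λ) ⊗ₜ[A] (LinearMap.restrictScalars A ψ v))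
          = y ⊗ₜ[A] (ψ v) := by
        rw [TensorProduct.smul_tmul', smul_eq_mul, mul_one]; rfl
      rw [h2, fslM_tmul_apply, LinearMap.smul_apply]
  | add x y hx hy =>
      have h1 : (fsrM A Λ (V →ₗ[MonoidAlgebra A M] V)) (x + y)
          = (fsrM A Λ (V →ₗ[MonoidAlgebra A M] V)) x
            + (fsrM A Λ (V →ₗ[MonoidAlgebra A M] V)) y :=
        (fsrM A Λ (V →ₗ[MonoidAlgebra A M] V)).map_add x y
      rw [h1]
      simp [hx, hy]

/-- The isomorphism `End_{A[M]}(σ₀) ⊗_A R ≅ End_{R[M]}(σ)` established in Section 5: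
if `σ₀` is a finitely generated `A[M]`-module and `σ = σ₀ ⊗_A R` is its universal
unramified twist along `π : M → Λ` (`R = A[Λ]`), then the natural map sending `ψ ⊗ y`
to the endomorphism determined by `v ⊗ x ↦ ψ(v) ⊗ y·x` is bijective. -/
theorem natTwistHom_bijective [Module.Finite (MonoidAlgebra A M) V] :
    Function.Bijective ⇑(natTwistHom (A := A) (V := V) π) := by
  letI := twistModule (A := A) (V := V) π
  constructor
  · -- injectivity
    rw [injective_iff_map_eq_zero]
    intro t ht
    have h0 : fsrM A Λ (V →ₗ[MonoidAlgebra A M] V) t = 0 := by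
      ext l v
      rw [natTwistHom_component π t l v, ht]
      simp
    exact (fsrM A Λ (V →ₗ[MonoidAlgebra A M] V)).injective
      (by
        rw [h0]
        exact (fsrM A Λ
          (V →ₗ[MonoidAlgebra A M] V)).map_zero.symm)
  · -- surjectivity
    intro φ
    -- component maps
    set F : V → (Λ →₀ V) := fun v =>
      fslM A Λ V (φ ((1 : MonoidAlgebra A Λ) ⊗ₜ[A] v)) with hF
    have Fadd : ∀ v w, F (v + w) = F v + F w := by
      intro v w
      simp only [hF, TensorProduct.tmul_add, map_add]
    -- the component maps are A[M]-linear
    set Ψ : Λ → (V →ₗ[MonoidAlgebra A M] V) := fun l =>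
      { toFun := fun v => F v l
        map_add' := fun v w => by
          show F (v + w) l = F v l + F w l
          rw [Fadd, Finsupp.add_apply]
        map_smul' := fun r v => comp_smul π φ r v l } with hΨ
    -- finite generation gives a uniform bound on supports
    obtain ⟨s, hs⟩ : (⊤ : Submodule (MonoidAlgebra A M) V).FG := Module.finite_def.mp ‹_›
    set T : Finset Λ := s.sup (fun v => (F v).support) with hTdef
    have hT : ∀ v : V, (F v).support ⊆ T := by
      intro v
      have hv : v ∈ Submodule.span (MonoidAlgebra A M) (s : Set V) := by
        rw [hs]; trivial
      induction hv using Submodule.span_induction with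
      | mem x hx => exact Finset.le_sup (f := fun v => (F v).support) hx
      | zero =>
          have : F 0 = 0 := by simp [hF]
          rw [this]; simp
      | add x y _ _ hx hy =>
          intro l hl
          rw [Finsupp.mem_support_iff] at hl
          rw [Fadd, Finsupp.add_apply] at hl
          by_cases h1 : F x l = 0
          · exact hy (Finsupp.mem_support_iff.mpr (by intro h2; rw [h1, h2] at hl; simp at hl))
          · exact hx (Finsupp.mem_support_iff.mpr h1)
      | smul r x _ hx =>
          intro l hl
          rw [Finsupp.mem_support_iff] at hl
          rw [hF] at hl
          rw [comp_smul π φ r x l] at hl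
          apply hx
          rw [Finsupp.mem_support_iff]
          intro h1
          rw [hF] at h1
          rw [h1, smul_zero] at hl
          exact hl rfl
    -- the preimage
    refine ⟨∑ l ∈ T, (Ψ l) ⊗ₜ[A] (MonoidAlgebra.single l (1 : A)), ?_⟩
    have hsum : natTwistHom (A := A) (V := V) π
        (∑ l ∈ T, (Ψ l) ⊗ₜ[A] (MonoidAlgebra.single l (1 : A)))
        = ∑ l ∈ T, pairMapTwist (A := A) (V := V) π (Ψ l) (MonoidAlgebra.single l (1 : A)) := by
      rw [map_sum]
      exact Finset.sum_congr rfl fun l _ => TensorProduct.liftAddHom_tmul _ _ _ _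
    rw [hsum]
    -- both sides agree on elements `1 ⊗ v`
    have key : ∀ v : V,
        (∑ l ∈ T, pairMapTwist (A := A) (V := V) π (Ψ l) (MonoidAlgebra.single l (1 : A)))
            ((1 : MonoidAlgebra A Λ) ⊗ₜ[A] v)
          = φ ((1 : MonoidAlgebra A Λ) ⊗ₜ[A] v) := by
      intro v
      rw [LinearMap.sum_apply]
      have hterm : ∀ l ∈ T,
          pairMapTwist (A := A) (V := V) π (Ψ l) (MonoidAlgebra.single l (1 : A))
              ((1 : MonoidAlgebra A Λ) ⊗ₜ[A] v)
            = (fslM A Λ V).symm (Finsupp.single l (F v l)) := by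
        intro l _
        rw [pairMapTwist_apply, LinearMap.baseChange_tmul,
          fslM_symm_single,
          TensorProduct.smul_tmul', smul_eq_mul, mul_one]
        rfl
      rw [Finset.sum_congr rfl hterm]
      have hms : (∑ l ∈ T, (fslM A Λ V).symm
            (Finsupp.single l (F v l)))
          = (fslM A Λ V).symm
              (∑ l ∈ T, Finsupp.single l (F v l)) := (map_sum _ _ _).symm
      have hFv : ∑ l ∈ T, Finsupp.single l (F v l) = F v := by
        symm
        conv_lhs => rw [← Finsupp.sum_single (F v)]
        rw [Finsupp.sum]
        exact Finset.sum_subset (hT v) (fun l _ hl => by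
          rw [Finsupp.notMem_support_iff.mp hl, Finsupp.single_zero])
      rw [hms, hFv]
      show (fslM A Λ V).symm
          ((fslM A Λ V) (φ ((1 : MonoidAlgebra A Λ) ⊗ₜ[A] v))) = _
      rw [LinearEquiv.symm_apply_apply]
    -- extend to all of `σ` by `R`-linearity and additivity
    apply LinearMap.ext
    intro x
    induction x using TensorProduct.induction_on with
    | zero => rw [map_zero, map_zero]
    | tmul r v =>
        have hx : r ⊗ₜ[A] v = r • ((1 : MonoidAlgebra A Λ) ⊗ₜ[A] v) := by
          rw [TensorProduct.smul_tmul', smul_eq_mul, mul_one]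
        rw [hx, phi_R_smul π φ, ← key v]
        rw [phi_R_smul π]
    | add x y hx hy => rw [map_add, map_add, hx, hy]

end
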